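/- Let p be a prime and g ∈ ℤ_p[X] a monic polynomial of degree p−1 whose constant coefficient equals p and all of whose remaining non-leading coefficients are divisible by p. Then g splits into linear factors over the p-th cyclotomic extension ℚ_p(ζ_p) of ℚ_p. -/

import Mathlib

open Polynomial Finset

namespace Statement13Aux

variable (p : ℕ) [hp : Fact p.Prime]

lemma isUnit_int (c : ℤ) (hc : ¬ (p:ℤ) ∣ c) : IsUnit ((c : ℤ_[p])) := by
  rw [PadicInt.isUnit_iff]
  rcases lt_or_eq_of_le (PadicInt.norm_le_one (c : ℤ_[p])) with h | h
  · exact absurd ((PadicInt.norm_int_lt_one_iff_dvd c).mp h) hc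
  · exact h

lemma monic_gen {A : Type*} [CommRing A] (n : ℕ) (c : ℕ → A) :
    (X^n + ∑ i ∈ Finset.range n, C (c i) * X^i).Monic := by
  apply monic_X_pow_add
  refine lt_of_le_of_lt (degree_sum_le _ _) ?_
  rw [Finset.sup_lt_iff (by exact_mod_cast WithBot.bot_lt_coe n)]
  intro i hi
  refine lt_of_le_of_lt (degree_C_mul_X_pow_le _ _) ?_
  exact_mod_cast Finset.mem_range.mp hi

lemma isUnit_add {A : Type*} [CommRing A] (I : Ideal A) [IsAdicComplete I A]
    {v j : A} (hv : IsUnit v) (hj : j ∈ I) : IsUnit (v + j) := by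
  obtain ⟨u, rfl⟩ := hv
  have h2 := Ideal.mem_jacobson_bot.mp (IsAdicComplete.le_jacobson_bot I hj) (↑u⁻¹)
  have hvj : (u:A) + j = u * (j * ↑u⁻¹ + 1) := by
    rw [mul_add, mul_one, ← mul_assoc, mul_comm (u:A) j, mul_assoc, Units.mul_inv, mul_one,
      add_comm]
  rw [hvj]
  exact u.isUnit.mul h2

lemma fermat (a : ℕ) (ha : 0 < a) (hap : a < p) :
    ∃ k : ℤ_[p], (a:ℤ_[p])^(p-1) - 1 = p * k := by
  have h0 : ((a:ZMod p)) ≠ 0 := by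
    rw [Ne, ZMod.natCast_eq_zero_iff]
    exact fun hd => absurd (Nat.le_of_dvd ha hd) (by omega)
  have h1 : (a:ZMod p)^(p-1) = 1 := ZMod.pow_card_sub_one_eq_one h0
  have h2 : (p:ℤ) ∣ (a:ℤ)^(p-1) - 1 := by
    rw [← ZMod.intCast_zmod_eq_zero_iff_dvd]
    push_cast
    rw [h1]
    ring
  obtain ⟨k, hk⟩ := h2
  refine ⟨(k : ℤ_[p]), ?_⟩
  have hcast := congrArg (fun z : ℤ => ((z : ℤ_[p]))) hk
  push_cast at hcast
  exact hcast

omit hp in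
lemma not_dvd_sub (a b : ℕ) (hap : a < p) (hbp : b < p) (hne : a ≠ b) :
    ¬ (p:ℤ) ∣ ((a:ℤ) - (b:ℤ)) := by
  intro hdvd
  have hne' : (a:ℤ) ≠ (b:ℤ) := by exact_mod_cast hne
  rcases lt_trichotomy ((a:ℤ) - b) 0 with hlt | heq | hgt
  · have := Int.le_of_dvd (by omega) (dvd_neg.mpr hdvd)
    omega
  · omega
  · have := Int.le_of_dvd hgt hdvd
    omega

noncomputable def E : Polynomial ℤ_[p] :=
  X^(p-1) + ∑ i ∈ Finset.range (p-1), C ((p.choose (i+1) : ℤ_[p])) * X^i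

lemma E_monic : (E p).Monic := monic_gen _ _

lemma E_eval₂ {S : Type*} [CommRing S] (f : ℤ_[p] →+* S) (t : S) :
    eval₂ f t (E p) = t^(p-1) + ∑ i ∈ Finset.range (p-1), (p.choose (i+1) : S) * t^i := by
  simp [E, eval₂_finset_sum, eval₂_mul, eval₂_pow, map_natCast]

lemma mul_E_eval₂ {S : Type*} [CommRing S] (f : ℤ_[p] →+* S) (t : S) :
    t * eval₂ f t (E p) = (t+1)^p - 1 := by
  have h1 : 0 < p := hp.out.pos
  rw [E_eval₂, mul_add, Finset.mul_sum, add_pow]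
  rw [Finset.sum_range_succ' (fun i => t^i * 1^(p-i) * (p.choose i : S)) p]
  have hp1 : p = (p-1) + 1 := (Nat.succ_pred_eq_of_pos h1).symm
  rw [show ∑ i ∈ Finset.range p, t^(i+1) * 1^(p-(i+1)) * (p.choose (i+1) : S)
      = ∑ i ∈ Finset.range ((p-1)+1), t^(i+1) * (p.choose (i+1) : S) by
    rw [← hp1]; exact Finset.sum_congr rfl fun i _ => by ring]
  rw [Finset.sum_range_succ, ← hp1, Nat.choose_self]
  have ht : t * t^(p-1) = t^p := by rw [← pow_succ', ← hp1]
  rw [ht, Nat.choose_zero_right]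
  push_cast
  simp only [pow_zero, one_pow, one_mul, mul_one]
  have hs : ∑ i ∈ range (p-1), t * ((p.choose (i+1) : S) * t^i)
      = ∑ x ∈ range (p - 1), t ^ (x + 1) * (p.choose (x + 1) : S) :=
    Finset.sum_congr rfl fun i _ => by rw [pow_succ']; ring
  rw [hs]; ring

noncomputable def xx : AdjoinRoot (E p) := AdjoinRoot.root (E p)

noncomputable def ww : AdjoinRoot (E p) :=
  - ∑ i ∈ Finset.range (p-1), ((p.choose (i+1) / p : ℕ) : AdjoinRoot (E p)) * (xx p)^i

lemma key : (xx p)^(p-1)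
    + ∑ i ∈ Finset.range (p-1), ((p.choose (i+1) : AdjoinRoot (E p))) * (xx p)^i = 0 := by
  have h := AdjoinRoot.eval₂_root (E p)
  rwa [E_eval₂] at h

lemma choose_div (i : ℕ) (hi : i < p - 1) : p * (p.choose (i+1) / p) = p.choose (i+1) :=
  Nat.mul_div_cancel' (hp.out.dvd_choose_self (Nat.succ_ne_zero i) (by omega))

lemma hpw : (p : AdjoinRoot (E p)) * ww p = (xx p)^(p-1) := by
  have h := key p
  rw [ww, mul_neg, Finset.mul_sum]
  rw [show ∑ i ∈ Finset.range (p-1),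
        (p:AdjoinRoot (E p)) * (((p.choose (i+1) / p : ℕ) : AdjoinRoot (E p)) * (xx p)^i)
      = ∑ i ∈ Finset.range (p-1), ((p.choose (i+1) : AdjoinRoot (E p))) * (xx p)^i from
    Finset.sum_congr rfl fun i hi => by
      rw [← mul_assoc, ← Nat.cast_mul, choose_div p i (Finset.mem_range.mp hi)]]
  linear_combination -h

lemma hxp (h2 : 2 < p) : (xx p) ∣ (p : AdjoinRoot (E p)) := by
  have h := key p
  have hp2 : p - 1 = (p-2) + 1 := by omega
  rw [hp2, Finset.sum_range_succ'
    (fun i => ((p.choose (i+1) : AdjoinRoot (E p))) * (xx p)^i) (p-2)] at h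
  simp only [pow_zero, mul_one, zero_add, Nat.choose_one_right] at h
  have hth : (p : AdjoinRoot (E p)) = -((xx p)^(p-1) + ∑ i ∈ Finset.range (p-2),
      ((p.choose (i+1+1) : AdjoinRoot (E p))) * (xx p)^(i+1)) := by
    rw [hp2]; linear_combination h
  rw [hth]
  refine dvd_neg.mpr (dvd_add (dvd_pow_self _ (by omega)) (Finset.dvd_sum fun i _ => ?_))
  exact Dvd.dvd.mul_left (dvd_pow_self _ (Nat.succ_ne_zero i)) _

lemma w_add_one (h2 : 2 < p) : (xx p) ∣ (ww p + 1) := by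
  have hp2 : p - 1 = (p-2) + 1 := by omega
  rw [ww, hp2, Finset.sum_range_succ'
    (fun i => ((p.choose (i+1) / p : ℕ) : AdjoinRoot (E p)) * (xx p)^i) (p-2)]
  simp only [pow_zero, mul_one, zero_add, Nat.choose_one_right, Nat.div_self hp.out.pos]
  rw [show -(∑ i ∈ Finset.range (p-2),
        ((p.choose (i+1+1) / p : ℕ) : AdjoinRoot (E p)) * (xx p)^(i+1) + ((1:ℕ):AdjoinRoot (E p))) + 1
      = -∑ i ∈ Finset.range (p-2),
        ((p.choose (i+1+1) / p : ℕ) : AdjoinRoot (E p)) * (xx p)^(i+1) by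
    push_cast; ring]
  refine dvd_neg.mpr (Finset.dvd_sum fun i _ => ?_)
  exact Dvd.dvd.mul_left (dvd_pow_self _ (Nat.succ_ne_zero i)) _

section Complete

variable {p}

lemma span_p_le (h : (xx p) ∣ (p : AdjoinRoot (E p))) (n : ℕ) :
    (Ideal.span {(p : AdjoinRoot (E p))})^n ≤ (Ideal.span {xx p})^n :=
  Ideal.pow_right_mono (Ideal.span_singleton_le_span_singleton.mpr h) n

lemma span_x_le (hw : (p : AdjoinRoot (E p)) * ww p = (xx p)^(p-1)) (n : ℕ) :
    (Ideal.span {xx p})^(n*(p-1)) ≤ (Ideal.span {(p : AdjoinRoot (E p))})^n := by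
  rw [Ideal.span_singleton_pow, Ideal.span_singleton_pow,
    Ideal.span_singleton_le_span_singleton, mul_comm n (p-1), pow_mul, ← hw, mul_pow]
  exact Dvd.intro _ rfl

noncomputable def B := (AdjoinRoot.powerBasis' (E_monic p)).basis

lemma mem_span_p_pow (r : AdjoinRoot (E p)) (n : ℕ) :
    r ∈ (Ideal.span {(p : AdjoinRoot (E p))})^n ↔ ∀ j, (p:ℤ_[p])^n ∣ (B (p := p)).repr r j := by
  rw [Ideal.span_singleton_pow, Ideal.mem_span_singleton]
  constructor
  · rintro ⟨s, rfl⟩ j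
    have hsm : (p:AdjoinRoot (E p))^n * s = ((p:ℤ_[p])^n) • s := by
      rw [Algebra.smul_def]; push_cast [map_pow]; rfl
    rw [hsm, map_smul]
    exact ⟨(B (p := p)).repr s j, rfl⟩
  · intro h
    choose d hd using h
    have hr : r = ((p:ℤ_[p])^n) • (∑ j, d j • (B (p := p)) j) := by
      conv_lhs => rw [← (B (p := p)).sum_repr r]
      rw [Finset.smul_sum]
      exact Finset.sum_congr rfl fun j _ => by rw [hd j, smul_smul]
    exact ⟨∑ j, d j • (B (p := p)) j, by rw [hr, Algebra.smul_def]; push_cast [map_pow]; rfl⟩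

lemma zp_mem (c : ℤ_[p]) (n : ℕ) :
    c ≡ 0 [SMOD ((IsLocalRing.maximalIdeal ℤ_[p]) ^ n • ⊤ : Submodule ℤ_[p] ℤ_[p])]
      ↔ (p:ℤ_[p])^n ∣ c := by
  rw [SModEq.zero, smul_eq_mul, Ideal.mul_top, PadicInt.maximalIdeal_eq_span_p,
    Ideal.span_singleton_pow, Ideal.mem_span_singleton]

lemma zp_mem' (c d : ℤ_[p]) (n : ℕ) :
    c ≡ d [SMOD ((IsLocalRing.maximalIdeal ℤ_[p]) ^ n • ⊤ : Submodule ℤ_[p] ℤ_[p])]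
      ↔ (p:ℤ_[p])^n ∣ (c - d) := by
  rw [SModEq.sub_mem, smul_eq_mul, Ideal.mul_top, PadicInt.maximalIdeal_eq_span_p,
    Ideal.span_singleton_pow, Ideal.mem_span_singleton]

theorem complete (hx : (xx p) ∣ (p : AdjoinRoot (E p))) (h1 : 0 < p - 1) :
    IsAdicComplete (Ideal.span {xx p}) (AdjoinRoot (E p)) := by
  have hw := hpw p
  refine { toIsHausdorff := ⟨?_⟩, toIsPrecomplete := ⟨?_⟩ }
  · intro r hr
    have key : ∀ n j, (p:ℤ_[p])^n ∣ (B (p := p)).repr r j := by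
      intro n j
      have h1' : r ∈ (Ideal.span {(p:AdjoinRoot (E p))})^n := by
        refine span_x_le hw n ?_
        have h := (SModEq.zero).mp (hr (n*(p-1)))
        rwa [smul_eq_mul, Ideal.mul_top] at h
      exact (mem_span_p_pow r n).mp h1' j
    refine (B (p := p)).ext_elem fun j => ?_
    rw [map_zero, Finsupp.zero_apply]
    refine (inferInstance : IsAdicComplete (IsLocalRing.maximalIdeal ℤ_[p]) ℤ_[p]
      ).toIsHausdorff.haus ((B (p := p)).repr r j) fun n => ?_
    exact (zp_mem _ n).mpr (key n j)
  · intro f hf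
    have hcompat : ∀ j : Fin (AdjoinRoot.powerBasis' (E_monic p)).dim, ∀ {m n : ℕ}, m ≤ n →
        (B (p := p)).repr (f (m*(p-1))) j ≡ (B (p := p)).repr (f (n*(p-1))) j
          [SMOD ((IsLocalRing.maximalIdeal ℤ_[p]) ^ m • ⊤ : Submodule ℤ_[p] ℤ_[p])] := by
      intro j m n hmn
      rw [zp_mem', ← Finsupp.sub_apply, ← map_sub]
      have hmem : f (m*(p-1)) - f (n*(p-1)) ∈ (Ideal.span {(p:AdjoinRoot (E p))})^m := by
        refine span_x_le hw m ?_
        have hmn' : m*(p-1) ≤ n*(p-1) := Nat.mul_le_mul_right _ hmn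
        have h := (SModEq.sub_mem).mp (hf hmn')
        rwa [smul_eq_mul, Ideal.mul_top] at h
      exact (mem_span_p_pow _ m).mp hmem j
    have hprec := fun j => (inferInstance : IsAdicComplete (IsLocalRing.maximalIdeal ℤ_[p]) ℤ_[p]
      ).toIsPrecomplete.prec (f := fun n => (B (p := p)).repr (f (n*(p-1))) j)
      (fun {m n} h => hcompat j h)
    choose c hc using hprec
    set Lc : AdjoinRoot (E p) := (B (p := p)).repr.symm (Finsupp.equivFunOnFinite.symm c) with hLc
    have hreprLc : ∀ j, (B (p := p)).repr Lc j = c j := by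
      intro j; rw [hLc, LinearEquiv.apply_symm_apply]; rfl
    refine ⟨Lc, fun n => ?_⟩
    rw [SModEq.sub_mem, smul_eq_mul, Ideal.mul_top]
    have h1m : f n - Lc = (f n - f (n*(p-1))) + (f (n*(p-1)) - Lc) := by ring
    rw [h1m]
    refine add_mem ?_ ?_
    · have h := (SModEq.sub_mem).mp (hf (Nat.le_mul_of_pos_right n h1))
      rwa [smul_eq_mul, Ideal.mul_top] at h
    · refine span_p_le hx n ?_
      rw [mem_span_p_pow _ n]
      intro j
      rw [map_sub, Finsupp.sub_apply, hreprLc j]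
      exact (zp_mem' _ _ n).mp (hc j n)

end Complete

end Statement13Aux

open Statement13Aux
set_option maxHeartbeats 1000000
set_option synthInstance.maxHeartbeats 400000

/-- Final step of Proposition 8.18: a monic polynomial `g ∈ ℤ_p[X]` of degree `p−1` with
constant coefficient `p` and all other non-leading coefficients divisible by `p` splits into
linear factors over the `p`-th cyclotomic extension `ℚ_p(ζ_p)`. -/
theorem statement13 (p : ℕ) [hp : Fact p.Prime]
    (g : Polynomial ℤ_[p]) (hmonic : g.Monic) (hdeg : g.natDegree = p - 1)
    (hconst : g.coeff 0 = (p : ℤ_[p]))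
    (hcoeff : ∀ i : ℕ, 0 < i → i < p - 1 → (p : ℤ_[p]) ∣ g.coeff i)
    (L : Type*) [Field L] [Algebra ℚ_[p] L]
    [IsCyclotomicExtension {p} ℚ_[p] L] :
    Polynomial.Splits ((g.map (algebraMap ℤ_[p] ℚ_[p])).map (algebraMap ℚ_[p] L)) := by
  rcases le_or_gt p 2 with h2 | h2
  · refine Splits.of_natDegree_le_one (le_trans natDegree_map_le (le_trans natDegree_map_le ?_))
    rw [hdeg]; omega
  have h1 : 0 < p - 1 := by omega
  -- the primitive p-th root of unity
  set ζ : L := IsCyclotomicExtension.zeta p ℚ_[p] L with hζdef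
  have hζ : IsPrimitiveRoot ζ p := IsCyclotomicExtension.zeta_spec p ℚ_[p] L
  have ht0 : ζ - 1 ≠ 0 := sub_ne_zero.mpr (hζ.ne_one (by omega))
  set f : ℤ_[p] →+* L := (algebraMap ℚ_[p] L).comp (algebraMap ℤ_[p] ℚ_[p]) with hfdef
  have hroot : eval₂ f (ζ - 1) (E p) = 0 := by
    have hm := mul_E_eval₂ p f (ζ - 1)
    rw [sub_add_cancel, hζ.pow_eq_one, sub_self] at hm
    exact (mul_eq_zero.mp hm).resolve_left ht0
  set φ : AdjoinRoot (E p) →+* L := AdjoinRoot.lift f (ζ - 1) hroot with hφdef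
  set ι : ℤ_[p] →+* AdjoinRoot (E p) := algebraMap ℤ_[p] (AdjoinRoot (E p)) with hιdef
  have hφι : ∀ z : ℤ_[p], φ (ι z) = f z := by
    intro z
    rw [hιdef, AdjoinRoot.algebraMap_eq]
    exact AdjoinRoot.lift_of hroot
  have hfcomp : φ.comp ι = f := RingHom.ext hφι
  -- adic completeness / Hensel setup
  haveI hcompl : IsAdicComplete (Ideal.span {xx p}) (AdjoinRoot (E p)) :=
    complete (hxp p h2) h1
  have hwunit : IsUnit (ww p) := by
    have h := isUnit_add (Ideal.span {xx p}) (isUnit_one (M := AdjoinRoot (E p))).neg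
      (Ideal.mem_span_singleton.mpr (w_add_one p h2))
    simpa using h
  set u : (AdjoinRoot (E p))ˣ := hwunit.unit with hudef
  have huw : (u : AdjoinRoot (E p)) = ww p := hwunit.unit_spec
  have hxu : (xx p)^(p-1) * (↑u⁻¹ : AdjoinRoot (E p)) = (p : AdjoinRoot (E p)) := by
    rw [← hpw p, ← huw, mul_assoc, Units.mul_inv, mul_one]
  -- coefficients of the transformed polynomial
  set d : ℕ → ℤ_[p] := fun i => if h : 0 < i ∧ i < p - 1 then (hcoeff i h.1 h.2).choose else 1
    with hddef
  have hd : ∀ i, i < p - 1 → g.coeff i = p * d i := by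
    intro i hi
    rcases Nat.eq_zero_or_pos i with rfl | hipos
    · have : d 0 = 1 := by rw [hddef]; exact dif_neg (by omega)
      rw [this, hconst, mul_one]
    · have : d i = (hcoeff i hipos hi).choose := by rw [hddef]; exact dif_pos ⟨hipos, hi⟩
      rw [this]
      exact (hcoeff i hipos hi).choose_spec
  have hd0 : d 0 = 1 := by rw [hddef]; exact dif_neg (by omega)
  set c : ℕ → AdjoinRoot (E p) :=
    fun i => (↑u⁻¹ : AdjoinRoot (E p)) * ι (d i) * (xx p)^i with hcdef
  set hPoly : Polynomial (AdjoinRoot (E p)) :=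
    X^(p-1) + ∑ i ∈ Finset.range (p-1), C (c i) * X^i with hPdef
  have hPmonic : hPoly.Monic := monic_gen _ _
  have hPeval : ∀ y : AdjoinRoot (E p),
      eval y hPoly = y^(p-1) + ∑ i ∈ Finset.range (p-1), c i * y^i := by
    intro y
    simp [hPdef, eval_finset_sum]
  -- the key evaluation identity
  have heval : ∀ y : AdjoinRoot (E p),
      eval (xx p * y) (g.map ι) = (xx p)^(p-1) * eval y hPoly := by
    intro y
    rw [eval_map, eval₂_eq_sum_range, hdeg, Finset.sum_range_succ]
    have hlc : g.coeff (p-1) = 1 := by rw [← hdeg]; exact hmonic.coeff_natDegree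
    rw [hlc, map_one, one_mul, hPeval y]
    have hterm : ∑ i ∈ Finset.range (p-1), (xx p)^(p-1) * (c i * y^i)
        = ∑ i ∈ Finset.range (p-1), ι (g.coeff i) * (xx p * y)^i := by
      refine Finset.sum_congr rfl fun i hi => ?_
      rw [hd i (Finset.mem_range.mp hi), map_mul, map_natCast, mul_pow, ← hxu]
      simp only [hcdef]
      ring
    rw [mul_add, Finset.mul_sum, hterm, mul_pow]
    ring
  -- Hensel's lemma for each residue
  have hHensel : ∀ a : ℕ, a ∈ Finset.Ioo 0 p → ∃ y : AdjoinRoot (E p),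
      eval y hPoly = 0 ∧ y - ((a : ℕ) : AdjoinRoot (E p)) ∈ Ideal.span {xx p} := by
    intro a ha
    obtain ⟨ha0, hap⟩ := Finset.mem_Ioo.mp ha
    obtain ⟨k, hk⟩ := fermat p a ha0 hap
    have hc0 : c 0 = (↑u⁻¹ : AdjoinRoot (E p)) := by
      simp only [hcdef]
      rw [hd0, map_one, mul_one, pow_zero, mul_one]
    have hevalmem : eval ((a : AdjoinRoot (E p))) hPoly ∈ Ideal.span {xx p} := by
      rw [Ideal.mem_span_singleton, hPeval]
      have hsplit : p - 1 = (p-2)+1 := by omega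
      rw [hsplit, Finset.sum_range_succ' (fun i => c i * ((a : AdjoinRoot (E p)))^i) (p-2)]
      have hrw : (a : AdjoinRoot (E p))^((p-2)+1)
          + (∑ i ∈ Finset.range (p-2), c (i+1) * ((a : AdjoinRoot (E p)))^(i+1)
            + c 0 * ((a : AdjoinRoot (E p)))^0)
          = ι ((a:ℤ_[p])^(p-1) - 1) + ((↑u⁻¹ : AdjoinRoot (E p)) + 1)
            + ∑ i ∈ Finset.range (p-2), c (i+1) * ((a : AdjoinRoot (E p)))^(i+1) := by
        rw [map_sub, map_one, map_pow, map_natCast, ← hsplit, hc0]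
        ring
      rw [hrw]
      refine dvd_add (dvd_add ?_ ?_) (Finset.dvd_sum fun i _ => ?_)
      · rw [hk, map_mul, map_natCast]
        exact Dvd.dvd.mul_right (hxp p h2) _
      · have hinv : (↑u⁻¹ : AdjoinRoot (E p)) + 1 = ↑u⁻¹ * (ww p + 1) := by
          rw [mul_add, mul_one, ← huw, Units.inv_mul, add_comm]
        rw [hinv]
        exact (w_add_one p h2).mul_left _
      · simp only [hcdef]
        exact Dvd.dvd.mul_right (Dvd.dvd.mul_left (dvd_pow_self _ (Nat.succ_ne_zero i)) _) _
    have hderiv : IsUnit (Ideal.Quotient.mk (Ideal.span {xx p})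
        (eval ((a : AdjoinRoot (E p))) (derivative hPoly))) := by
      have hder : derivative hPoly = C (((p-1:ℕ)) : AdjoinRoot (E p)) * X^(p-1-1)
          + ∑ i ∈ Finset.range (p-1), C (c i * (i:ℕ)) * X^(i-1) := by
        rw [hPdef, derivative_add, derivative_X_pow, derivative_sum]
        congr 1
        exact Finset.sum_congr rfl fun i _ => derivative_C_mul_X_pow _ _
      rw [hder, eval_add, eval_mul, eval_C, eval_pow, eval_X, eval_finset_sum, RingHom.map_add]
      have hsum0 : (Ideal.Quotient.mk (Ideal.span {xx p}))
          (∑ i ∈ Finset.range (p-1),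
            eval ((a : AdjoinRoot (E p))) (C (c i * (i:ℕ)) * X^(i-1))) = 0 := by
        rw [Ideal.Quotient.eq_zero_iff_mem]
        refine Ideal.sum_mem _ fun i _ => ?_
        rcases Nat.eq_zero_or_pos i with rfl | hip
        · simp
        · rw [eval_mul, eval_C, eval_pow, eval_X]
          refine Ideal.mem_span_singleton.mpr ?_
          simp only [hcdef]
          exact Dvd.dvd.mul_right (Dvd.dvd.mul_right
            (Dvd.dvd.mul_left (dvd_pow_self _ hip.ne') _) _) _
      rw [hsum0, add_zero]
      have hndvd : ¬ (p:ℤ) ∣ (((p-1) * a^(p-1-1) : ℕ) : ℤ) := by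
        intro hdvd
        push_cast at hdvd
        rcases Int.Prime.dvd_mul' hp.out hdvd with hca | hca
        · have := Int.le_of_dvd (by exact_mod_cast h1) hca
          omega
        · have hda := Int.Prime.dvd_pow' hp.out hca
          have := Int.le_of_dvd (by exact_mod_cast ha0) hda
          omega
      have hunit := isUnit_int p (((p-1) * a^(p-1-1) : ℕ) : ℤ) hndvd
      have hunit2 : IsUnit (ι ((((p-1) * a^(p-1-1) : ℕ) : ℤ) : ℤ_[p])) := hunit.map ι
      have hcast : ι ((((p-1) * a^(p-1-1) : ℕ) : ℤ) : ℤ_[p])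
          = ((p-1:ℕ) : AdjoinRoot (E p)) * ((a : AdjoinRoot (E p)))^(p-1-1) := by
        rw [Int.cast_natCast, map_natCast, Nat.cast_mul, Nat.cast_pow]
      rw [hcast] at hunit2
      exact hunit2.map (Ideal.Quotient.mk (Ideal.span {xx p}))
    obtain ⟨y, hy1, hy2⟩ := HenselianRing.is_henselian (I := Ideal.span {xx p})
      hPoly hPmonic ((a : AdjoinRoot (E p))) hevalmem hderiv
    exact ⟨y, hy1, hy2⟩
  choose! Y hY1 hY2 using hHensel
  -- roots in L
  have hGmap : g.map f = (g.map ι).map φ := by rw [Polynomial.map_map, hfcomp]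
  have hGne : g.map f ≠ 0 := (hmonic.map f).ne_zero
  have hroots_mem : ∀ a ∈ Finset.Ioo 0 p, φ (xx p * Y a) ∈ (g.map f).roots := by
    intro a ha
    refine (mem_roots hGne).mpr ?_
    show eval _ _ = 0
    rw [hGmap, eval_map, eval₂_at_apply, heval (Y a), hY1 a ha, mul_zero, map_zero]
  have hφx : φ (xx p) = ζ - 1 := AdjoinRoot.lift_root hroot
  have hinj : Set.InjOn (fun a : ℕ => φ (xx p * Y a)) (Finset.Ioo 0 p) := by
    intro a ha b hb hab
    by_contra hne
    obtain ⟨ha0, hap⟩ := Finset.mem_Ioo.mp (Finset.mem_coe.mp ha)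
    obtain ⟨hb0, hbp⟩ := Finset.mem_Ioo.mp (Finset.mem_coe.mp hb)
    have haI := hY2 a (Finset.mem_coe.mp ha)
    have hbI := hY2 b (Finset.mem_coe.mp hb)
    have hdiffunit : IsUnit (Y a - Y b) := by
      have hj : (Y a - ((a:ℕ) : AdjoinRoot (E p))) - (Y b - ((b:ℕ) : AdjoinRoot (E p)))
          ∈ Ideal.span {xx p} := sub_mem haI hbI
      have hvu : IsUnit (((a:ℕ) : AdjoinRoot (E p)) - ((b:ℕ) : AdjoinRoot (E p))) := by
        have h0 := (isUnit_int p ((a:ℤ) - (b:ℤ)) (not_dvd_sub p a b hap hbp hne)).map ι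
        have hcast : ι ((((a:ℤ) - (b:ℤ) : ℤ)) : ℤ_[p])
            = ((a:ℕ) : AdjoinRoot (E p)) - ((b:ℕ) : AdjoinRoot (E p)) := by
          rw [Int.cast_sub, Int.cast_natCast, Int.cast_natCast, map_sub, map_natCast, map_natCast]
        rwa [hcast] at h0
      have h := isUnit_add (Ideal.span {xx p}) hvu hj
      have heq : ((a:ℕ) : AdjoinRoot (E p)) - ((b:ℕ) : AdjoinRoot (E p))
          + ((Y a - ((a:ℕ) : AdjoinRoot (E p))) - (Y b - ((b:ℕ) : AdjoinRoot (E p))))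
          = Y a - Y b := by ring
      rwa [heq] at h
    have hφne : φ (xx p * Y a) - φ (xx p * Y b) ≠ 0 := by
      have hfac : φ (xx p * Y a) - φ (xx p * Y b) = φ (xx p) * φ (Y a - Y b) := by
        rw [← map_mul, ← map_sub, mul_sub]
      rw [hfac, hφx]
      exact mul_ne_zero ht0 (hdiffunit.map φ).ne_zero
    exact hφne (sub_eq_zero.mpr hab)
  -- counting roots
  classical
  have hcardT : ((Finset.Ioo 0 p).image (fun a : ℕ => φ (xx p * Y a))).card = p - 1 := by
    rw [Finset.card_image_of_injOn hinj, Nat.card_Ioo]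
    omega
  have hle : ((Finset.Ioo 0 p).image (fun a : ℕ => φ (xx p * Y a))).val ≤ (g.map f).roots := by
    refine Finset.val_le_iff_val_subset.mpr ?_
    intro z hz
    obtain ⟨a, ha, rfl⟩ := Finset.mem_image.mp (Finset.mem_val.mp hz)
    exact hroots_mem a ha
  have hge : p - 1 ≤ Multiset.card (g.map f).roots := by
    have hcc := Multiset.card_le_card hle
    rwa [← hcardT]
  rw [Polynomial.map_map, ← hfdef, splits_iff_card_roots]
  have hdeg2 : (g.map f).natDegree = p - 1 := by rw [hmonic.natDegree_map, hdeg]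
  have hle2 := (g.map f).card_roots'
  omega
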